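/- arXiv:2507.11970 — 3 statements merged into one kernel-verified Lean document; each statement's English description precedes it below -/
import Mathlib

section
/- Gentle measurement: let ρ be a density matrix and Π a projector with Tr(Πρ) ≤ ε < 1. Let ρ' = (I−Π)ρ(I−Π)/Tr((I−Π)ρ) be the post-measurement state after obtaining the outcome I−Π. Then the trace distance (1/2)‖ρ − ρ'‖₁ is at most 2√ε. -/
open scoped Matrix ComplexOrder

/-- Trace norm `‖A‖₁ = Tr √(AᴴA)`. -/
noncomputable def traceNorm {m : Type*} [Fintype m] [DecidableEq m] (A : Matrix m m ℂ) : ℝ :=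
  ∑ i, Real.sqrt ((Matrix.isHermitian_conjTranspose_mul_self A).eigenvalues i)

section aux
variable {ι : Type*} [Fintype ι] [DecidableEq ι]

open Matrix in
private lemma psd_trace {M : Matrix ι ι ℂ}
    (hM : M.PosSemidef) : 0 ≤ M.trace.re ∧ ((M.trace.re : ℝ) : ℂ) = M.trace := by
  have h : ∀ i, 0 ≤ M i i := by
    intro i
    exact hM.diag_nonneg
  have h0 : (0 : ℂ) ≤ M.trace := Finset.sum_nonneg fun i _ => h i
  rw [Complex.le_def] at h0
  constructor
  · simpa using h0.1
  · apply Complex.ext <;> simp [← h0.2]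

open Matrix in
private lemma trace_form (A B : Matrix ι ι ℂ) :
    (Aᴴ * B).trace = ∑ p : ι × ι, (starRingEnd ℂ) (A p.2 p.1) * B p.2 p.1 := by
  rw [Fintype.sum_prod_type, Matrix.trace]
  simp [Matrix.mul_apply, Matrix.conjTranspose_apply, Matrix.diag]

open Matrix in
private lemma trace_CS (A B : Matrix ι ι ℂ) :
    ‖(Aᴴ * B).trace‖ ≤
      Real.sqrt ((Aᴴ * A).trace.re) * Real.sqrt ((Bᴴ * B).trace.re) := by
  have hA : (Aᴴ * A).trace.re = ∑ p : ι × ι, (‖A p.2 p.1‖) ^ 2 := by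
    rw [trace_form, Complex.re_sum]
    congr 1; ext p
    rw [mul_comm, Complex.mul_conj']
    rw [← Complex.ofReal_pow, Complex.ofReal_re, Complex.sq_norm, Complex.normSq_apply]
  have hB : (Bᴴ * B).trace.re = ∑ p : ι × ι, (‖B p.2 p.1‖) ^ 2 := by
    rw [trace_form, Complex.re_sum]
    congr 1; ext p
    rw [mul_comm, Complex.mul_conj']
    rw [← Complex.ofReal_pow, Complex.ofReal_re, Complex.sq_norm, Complex.normSq_apply]
  rw [trace_form, hA, hB]
  calc ‖∑ p : ι × ι, (starRingEnd ℂ) (A p.2 p.1) * B p.2 p.1‖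
      ≤ ∑ p : ι × ι, ‖(starRingEnd ℂ) (A p.2 p.1) * B p.2 p.1‖ :=
        norm_sum_le _ _
    _ = ∑ p : ι × ι, ‖A p.2 p.1‖ * ‖B p.2 p.1‖ := by
        simp [_root_.map_mul]
    _ ≤ _ := Real.sum_mul_le_sqrt_mul_sqrt _ _ _

open scoped MatrixOrder in
open Matrix in
private lemma term_bound {ρ : Matrix ι ι ℂ}
    (hρ : ρ.PosSemidef) (S A B : Matrix ι ι ℂ)
    (hS : Sᴴ = S) (hSS : S * S = 1) (hA : Aᴴ = A) (hAA : A * A = A)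
    (hB : Bᴴ = B) (hBB : B * B = B) :
    ‖(S * (A * ρ * B)).trace‖ ≤
      Real.sqrt ((A * ρ).trace.re) * Real.sqrt ((B * ρ).trace.re) := by
  set R := CFC.sqrt ρ with hRdef
  have hR : R * R = ρ := CFC.sqrt_mul_sqrt_self ρ hρ.nonneg
  have hRh : Rᴴ = R := (CFC.sqrt_nonneg ρ).posSemidef.1
  have key : S * (A * ρ * B) = (R * A * S)ᴴ * (R * B) := by
    simp only [conjTranspose_mul, hS, hA, hRh, ← hR]
    noncomm_ring
  have e1 : ((R * A * S)ᴴ * (R * A * S)).trace = (A * ρ).trace := by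
    simp only [conjTranspose_mul, hS, hA, hRh]
    have : S * (A * R) * (R * A * S) = S * (A * ρ * A * S) := by
      rw [← hR]; noncomm_ring
    rw [this, Matrix.trace_mul_comm, mul_assoc, hSS, mul_one]
    rw [show A * ρ * A = A * (ρ * A) by noncomm_ring, Matrix.trace_mul_comm,
      show ρ * A * A = ρ * (A * A) by noncomm_ring, hAA, Matrix.trace_mul_comm]
  have e2 : ((R * B)ᴴ * (R * B)).trace = (B * ρ).trace := by
    simp only [conjTranspose_mul, hRh, hB]
    have : B * R * (R * B) = B * (ρ * B) := by rw [← hR]; noncomm_ring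
    rw [this, Matrix.trace_mul_comm,
      show ρ * B * B = ρ * (B * B) by noncomm_ring, hBB, Matrix.trace_mul_comm]
  calc ‖(S * (A * ρ * B)).trace‖
      ≤ Real.sqrt (((R * A * S)ᴴ * (R * A * S)).trace.re) *
        Real.sqrt (((R * B)ᴴ * (R * B)).trace.re) := by rw [key]; exact trace_CS _ _
    _ = _ := by rw [e1, e2]

open scoped MatrixOrder in
open Matrix in
private lemma exists_sign {H : Matrix ι ι ℂ}
    (hH : H.IsHermitian) :
    ∃ S : Matrix ι ι ℂ, Sᴴ = S ∧ S * S = 1 ∧ (S * H).trace = ((traceNorm H : ℝ) : ℂ) := by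
  set U : Matrix ι ι ℂ := (hH.eigenvectorUnitary : Matrix ι ι ℂ) with hUdef
  have hU1 : U * star U = 1 := (Matrix.mem_unitaryGroup_iff).mp hH.eigenvectorUnitary.2
  have hU2 : star U * U = 1 := (Matrix.mem_unitaryGroup_iff').mp hH.eigenvectorUnitary.2
  set μ : ι → ℝ := hH.eigenvalues with hμdef
  set g : ι → ℝ := fun i => if μ i < 0 then -1 else 1 with hg
  have conj_mul : ∀ M N : Matrix ι ι ℂ,
      (U * M * star U) * (U * N * star U) = U * (M * N) * star U := by
    intro M N
    calc (U * M * star U) * (U * N * star U)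
        = U * M * (star U * U) * (N * star U) := by noncomm_ring
      _ = U * (M * N) * star U := by rw [hU2]; noncomm_ring
  have tr_conj : ∀ M : Matrix ι ι ℂ, (U * M * star U).trace = M.trace := by
    intro M
    rw [Matrix.trace_mul_cycle, hU2, one_mul]
  set E : Matrix ι ι ℂ := Matrix.diagonal (fun i => ((g i : ℝ) : ℂ)) with hE
  refine ⟨U * E * star U, ?_, ?_, ?_⟩
  · simp [hE, Matrix.conjTranspose_mul, Matrix.diagonal_conjTranspose,
      Matrix.star_eq_conjTranspose, mul_assoc, Function.comp, Pi.star_def,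
      Complex.star_def, Complex.conj_ofReal]
  · rw [conj_mul]
    have : E * E = 1 := by
      rw [hE, Matrix.diagonal_mul_diagonal]
      convert Matrix.diagonal_one with i
      rw [← Complex.ofReal_mul]
      have : g i * g i = 1 := by simp only [hg]; split <;> norm_num
      rw [this]; norm_num
    rw [this, mul_one, hU1]
  · -- trace computation
    have hspec : H = U * Matrix.diagonal (fun i => ((μ i : ℝ) : ℂ)) * star U := by
      convert hH.spectral_theorem using 1
      rw [Unitary.conjStarAlgAut_apply]
      rfl
    have htr1 : ((U * E * star U) * H).trace = ∑ i, ((|μ i| : ℝ) : ℂ) := by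
      rw [hspec, conj_mul, tr_conj, hE, Matrix.diagonal_mul_diagonal, Matrix.trace_diagonal]
      congr 1; ext i
      rw [← Complex.ofReal_mul]
      congr 1
      rw [hg]
      rcases lt_or_ge (μ i) 0 with h | h
      · simp [h, abs_of_neg h]
      · simp [not_lt.mpr h, abs_of_nonneg h]
    rw [htr1]
    have hB : (Hᴴ * H).PosSemidef := Matrix.posSemidef_conjTranspose_mul_self H
    set M : Matrix ι ι ℂ := U * Matrix.diagonal (fun i => ((|μ i| : ℝ) : ℂ)) * star U with hM
    have hMpsd : M.PosSemidef := by
      have hd : (Matrix.diagonal (fun i => ((|μ i| : ℝ) : ℂ))).PosSemidef :=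
        Matrix.PosSemidef.diagonal (by
          intro i
          simpa using Complex.zero_le_real.mpr (abs_nonneg (μ i)))
      have := hd.mul_mul_conjTranspose_same U
      rwa [← Matrix.star_eq_conjTranspose] at this
    have hM2 : M * M = Hᴴ * H := by
      have hdd : (fun i => ((|μ i| : ℝ) : ℂ) * ((|μ i| : ℝ) : ℂ))
          = fun i => ((μ i : ℝ) : ℂ) * ((μ i : ℝ) : ℂ) := by
        funext i
        rw [← Complex.ofReal_mul, ← Complex.ofReal_mul, ← sq, ← sq, sq_abs]
      rw [hH.eq, hspec, hM, conj_mul, conj_mul, Matrix.diagonal_mul_diagonal,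
        Matrix.diagonal_mul_diagonal, hdd]
    have hMsqrt : M = CFC.sqrt (Hᴴ * H) :=
      ((CFC.sqrt_eq_iff _ _ hB.nonneg hMpsd.nonneg).mpr hM2).symm
    have htrM : M.trace = ∑ i, ((|μ i| : ℝ) : ℂ) := by
      rw [hM, tr_conj, Matrix.trace_diagonal]
    have hsqrt_tr : (CFC.sqrt (Hᴴ * H)).trace = ∑ i, ((Real.sqrt (hB.1.eigenvalues i) : ℝ) : ℂ) := by
      rw [CFC.sqrt_eq_cfc, cfc_nnreal_eq_real _ (Hᴴ * H) hB.nonneg, hB.1.cfc_eq, Matrix.IsHermitian.cfc,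
        Unitary.conjStarAlgAut_apply]
      rw [Matrix.trace_mul_cycle]
      rw [show (star hB.1.eigenvectorUnitary : Matrix ι ι ℂ) * hB.1.eigenvectorUnitary.1
          = 1 from (Matrix.mem_unitaryGroup_iff').mp hB.1.eigenvectorUnitary.2]
      rw [one_mul, Matrix.trace_diagonal]
      refine Finset.sum_congr rfl fun i _ => ?_
      simp only [Function.comp_apply, Real.coe_sqrt, Real.coe_toNNReal',
        max_eq_left (hB.eigenvalues_nonneg i)]
      rfl
    have hTN : traceNorm H = ∑ i, Real.sqrt (hB.1.eigenvalues i) := rfl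
    rw [← htrM, hMsqrt, hsqrt_tr, hTN]
    push_cast
    rfl

end aux

/-- **gentle measurement.** -/
theorem stmt2 {ι : Type} [Fintype ι] [DecidableEq ι]
    (ρ P : Matrix ι ι ℂ) (ε : ℝ)
    (hρ : ρ.PosSemidef) (htr : ρ.trace = 1)
    (hproj : P * P = P) (hherm : Pᴴ = P)
    (hε : ((P * ρ).trace).re ≤ ε) (hε1 : ε < 1) :
    (1 / 2) * traceNorm (ρ -
        ((((1 : Matrix ι ι ℂ) - P) * ρ * ((1 : Matrix ι ι ℂ) - P)).trace)⁻¹ •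
          (((1 : Matrix ι ι ℂ) - P) * ρ * ((1 : Matrix ι ι ℂ) - P)))
      ≤ 2 * Real.sqrt ε := by
  set Q : Matrix ι ι ℂ := (1 : Matrix ι ι ℂ) - P with hQdef
  have hρh : ρᴴ = ρ := hρ.1
  have hQh : Qᴴ = Q := by
    rw [hQdef, Matrix.conjTranspose_sub, Matrix.conjTranspose_one, hherm]
  have hQQ : Q * Q = Q := by
    rw [hQdef]
    simp [sub_mul, mul_sub, hproj]
  -- trace of P ρ is a nonneg real ≤ ε
  have hPρP : (P * ρ * P).PosSemidef := by
    have := hρ.mul_mul_conjTranspose_same P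
    rwa [hherm] at this
  have htrP : (P * ρ * P).trace = (P * ρ).trace := by
    rw [Matrix.trace_mul_comm, ← mul_assoc, hproj]
  set r : ℝ := ((P * ρ).trace).re with hrdef
  have hp : (P * ρ).trace = ((r : ℝ) : ℂ) := by
    have h := (psd_trace hPρP).2
    rw [htrP] at h
    exact h.symm
  have hr0 : 0 ≤ r := by
    have h := (psd_trace hPρP).1
    rwa [htrP] at h
  have hrε : r ≤ ε := hε
  -- trace of Q ρ Q
  have htrQ : (Q * ρ * Q).trace = (Q * ρ).trace := by
    rw [Matrix.trace_mul_comm, ← mul_assoc, hQQ]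
  set t : ℝ := 1 - r with htdef
  have ht0 : 0 < t := by simp only [htdef]; linarith
  have ht1 : t ≤ 1 := by simp only [htdef]; linarith
  have hτ : (Q * ρ * Q).trace = ((t : ℝ) : ℂ) := by
    rw [htrQ, hQdef, Matrix.sub_mul, Matrix.one_mul, Matrix.trace_sub, htr, hp, htdef]
    push_cast
    ring
  set H : Matrix ι ι ℂ := ρ - ((Q * ρ * Q).trace)⁻¹ • (Q * ρ * Q) with hHdef
  have eQρQ : (Q * ρ * Q)ᴴ = Q * ρ * Q := by
    rw [show (Q * ρ * Q)ᴴ = Qᴴ * (ρᴴ * Qᴴ) by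
      rw [Matrix.conjTranspose_mul, Matrix.conjTranspose_mul]]
    rw [hQh, hρh, ← mul_assoc]
  have hHherm : H.IsHermitian := by
    show Hᴴ = H
    rw [hHdef, Matrix.conjTranspose_sub, hρh, Matrix.conjTranspose_smul, eQρQ, hτ,
      Complex.star_def, ← Complex.ofReal_inv, Complex.conj_ofReal]
  obtain ⟨S, hSh, hSS, hStr⟩ := exists_sign hHherm
  -- decomposition of ρ
  have hρdecomp : ρ = P * ρ * (1 : Matrix ι ι ℂ) + (1 : Matrix ι ι ℂ) * ρ * P - P * ρ * P
      + Q * ρ * Q := by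
    rw [hQdef]; noncomm_ring
  have hdecomp : S * H = S * (P * ρ * (1 : Matrix ι ι ℂ)) + S * ((1 : Matrix ι ι ℂ) * ρ * P)
      - S * (P * ρ * P)
      + (1 - ((Q * ρ * Q).trace)⁻¹) • (S * (Q * ρ * Q)) := by
    have step : S * H = S * ρ - ((Q * ρ * Q).trace)⁻¹ • (S * (Q * ρ * Q)) := by
      rw [hHdef, Matrix.mul_sub, Matrix.mul_smul]
    rw [step]
    nth_rewrite 1 [hρdecomp]
    simp only [mul_add, mul_sub, sub_smul, one_smul]
    abel
  have htrace_eq : ((traceNorm H : ℝ) : ℂ)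
      = (S * (P * ρ * (1 : Matrix ι ι ℂ))).trace + (S * ((1 : Matrix ι ι ℂ) * ρ * P)).trace
        - (S * (P * ρ * P)).trace
        + (1 - ((Q * ρ * Q).trace)⁻¹) * (S * (Q * ρ * Q)).trace := by
    rw [← hStr, hdecomp]
    rw [Matrix.trace_add, Matrix.trace_sub, Matrix.trace_add, Matrix.trace_smul]
    simp [smul_eq_mul]
  -- term bounds
  have hone1 : (1 : Matrix ι ι ℂ)ᴴ = 1 := Matrix.conjTranspose_one
  have hone2 : (1 : Matrix ι ι ℂ) * 1 = 1 := one_mul 1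
  have h1 := term_bound hρ S P 1 hSh hSS hherm hproj hone1 hone2
  have h2 := term_bound hρ S 1 P hSh hSS hone1 hone2 hherm hproj
  have h3 := term_bound hρ S P P hSh hSS hherm hproj hherm hproj
  have h4 := term_bound hρ S Q Q hSh hSS hQh hQQ hQh hQQ
  have honeρ : ((1 : Matrix ι ι ℂ) * ρ).trace.re = 1 := by
    rw [Matrix.one_mul, htr]; simp
  have hQρre : (Q * ρ).trace.re = t := by
    rw [← htrQ, hτ]; simp
  rw [honeρ] at h1 h2
  rw [hQρre] at h4
  rw [← hrdef] at h1 h2 h3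
  rw [Real.sqrt_one] at h1 h2
  -- scalar norm
  have hscal : ‖1 - ((Q * ρ * Q).trace)⁻¹‖ = t⁻¹ - 1 := by
    rw [hτ, ← Complex.ofReal_inv, ← Complex.ofReal_one, ← Complex.ofReal_sub]
    rw [Complex.norm_real, Real.norm_eq_abs, abs_of_nonpos]
    · ring
    · have : 1 ≤ t⁻¹ := (one_le_inv₀ ht0).2 ht1
      linarith
  -- main bound
  have hmain : traceNorm H ≤ Real.sqrt r * 1 + 1 * Real.sqrt r + Real.sqrt r * Real.sqrt r
      + (t⁻¹ - 1) * (Real.sqrt t * Real.sqrt t) := by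
    have hre : traceNorm H = (((traceNorm H : ℝ) : ℂ)).re := by simp
    rw [hre, htrace_eq]
    set T1 := (S * (P * ρ * (1 : Matrix ι ι ℂ))).trace
    set T2 := (S * ((1 : Matrix ι ι ℂ) * ρ * P)).trace
    set T3 := (S * (P * ρ * P)).trace
    set T4 := (S * (Q * ρ * Q)).trace
    set c := (1 - ((Q * ρ * Q).trace)⁻¹)
    calc (T1 + T2 - T3 + c * T4).re ≤ ‖T1 + T2 - T3 + c * T4‖ :=
          Complex.re_le_norm _
      _ ≤ ‖T1 + T2 - T3‖ + ‖c * T4‖ := norm_add_le _ _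
      _ ≤ ‖T1 + T2‖ + ‖T3‖ + ‖c * T4‖ := by
          have := norm_sub_le (T1 + T2) T3
          linarith [this]
      _ ≤ ‖T1‖ + ‖T2‖ + ‖T3‖ + ‖c * T4‖ := by
          have := norm_add_le T1 T2
          linarith [this]
      _ = ‖T1‖ + ‖T2‖ + ‖T3‖
            + (t⁻¹ - 1) * ‖T4‖ := by
          rw [norm_mul, hscal]
      _ ≤ _ := by
          have h4' : (t⁻¹ - 1) * ‖T4‖ ≤ (t⁻¹ - 1) * (Real.sqrt t * Real.sqrt t) := by
            apply mul_le_mul_of_nonneg_left h4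
            have : 1 ≤ t⁻¹ := (one_le_inv₀ ht0).2 ht1
            linarith
          linarith [h1, h2, h3, h4']
  rw [Real.mul_self_sqrt ht0.le, Real.mul_self_sqrt hr0] at hmain
  have hrt : (t⁻¹ - 1) * t = r := by
    have h1t : (t⁻¹ - 1) * t = 1 - t := by field_simp
    rw [h1t, htdef]; ring
  rw [hrt] at hmain
  -- conclude
  have hsr : Real.sqrt r ≤ Real.sqrt ε := Real.sqrt_le_sqrt hrε
  have hε0 : 0 ≤ ε := le_trans hr0 hrε
  have hs1 : Real.sqrt ε ≤ 1 := by
    rw [show (1:ℝ) = Real.sqrt 1 from Real.sqrt_one.symm]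
    exact Real.sqrt_le_sqrt hε1.le
  have hεsqrt : ε ≤ Real.sqrt ε := by
    nlinarith [Real.sq_sqrt hε0, Real.sqrt_nonneg ε]
  linarith [hmain, hsr, hεsqrt, hrε]
end

section
/- Pauli key update for the coset authentication code: with key k = (S, Δ, x, z) and Pauli P = X^u Z^v on n qubits, define k_P = (S, Δ, x', z') where x'_i = x_i ⊕ u_iΔ and z'_i = z_i ⊕ v_i Δ̂ (Δ̂ ∈ S^⊥ with ⟨Δ̂,Δ⟩ = 1). Then the encoding isometries satisfy Enc_{k_P} = (−1)^{Σ_i u_i⟨Δ,z_i⟩} · Enc_k ∘ P; i.e., they agree up to a global phase. -/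
open scoped Classical

/-- Amplitude, at basis point `c ∈ F₂^d`, of the single-block encoding
`X^x Z^z |S + wΔ⟩`, where `|S + v⟩ = |S|^{-1/2} Σ_{s∈S} |s+v⟩`. -/
noncomputable def blockEnc {d : ℕ} (S : Submodule (ZMod 2) (Fin d → ZMod 2))
    (Δ : Fin d → ZMod 2) (x z : Fin d → ZMod 2) (w : ZMod 2) :
    (Fin d → ZMod 2) → ℂ :=
  fun c => (if c + x + w • Δ ∈ S then 1 else 0) *
    (-1 : ℂ) ^ ((∑ j, z j * (c j + x j) : ZMod 2)).val *
    ((Real.sqrt (Nat.card S) : ℝ) : ℂ)⁻¹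

/-- The coset-authentication encoding `Enc_k` with key `k = (S, Δ, x, z)`, acting on an
`n`-qubit plaintext amplitude function `ψ`. -/
noncomputable def cosetEnc {d n : ℕ} (S : Submodule (ZMod 2) (Fin d → ZMod 2))
    (Δ : Fin d → ZMod 2) (x z : Fin n → (Fin d → ZMod 2))
    (ψ : (Fin n → ZMod 2) → ℂ) : (Fin n → (Fin d → ZMod 2)) → ℂ :=
  fun c => ∑ w : Fin n → ZMod 2, ψ w * ∏ i, blockEnc S Δ (x i) (z i) (w i) (c i)

/-- The `n`-qubit Pauli `X^u Z^v` acting on plaintext amplitude functions: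
`X^u Z^v |w⟩ = (−1)^{⟨v,w⟩} |w ⊕ u⟩`. -/
def pauliAct {n : ℕ} (u v : Fin n → ZMod 2)
    (ψ : (Fin n → ZMod 2) → ℂ) : (Fin n → ZMod 2) → ℂ :=
  fun w => (-1 : ℂ) ^ ((∑ i, v i * (w i + u i) : ZMod 2)).val * ψ (w + u)

noncomputable def χ (a : ZMod 2) : ℂ := (-1 : ℂ) ^ a.val

lemma χ_add (a b : ZMod 2) : χ (a + b) = χ a * χ b := by
  simp only [χ, ZMod.val_add, ← neg_one_pow_eq_pow_mod_two, pow_add]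

lemma χ_sum {ι : Type*} (s : Finset ι) (f : ι → ZMod 2) :
    χ (∑ i ∈ s, f i) = ∏ i ∈ s, χ (f i) := by
  classical
  induction s using Finset.induction_on with
  | empty => simp [χ]
  | insert _ _ h ih => rw [Finset.sum_insert h, Finset.prod_insert h, χ_add, ih]

lemma block_key {d : ℕ} (S : Submodule (ZMod 2) (Fin d → ZMod 2))
    (Δ Δhat : Fin d → ZMod 2)
    (hperp : ∀ s ∈ S, (∑ j, Δhat j * s j : ZMod 2) = 0)
    (hpair : (∑ j, Δhat j * Δ j : ZMod 2) = 1)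
    (x z : Fin d → ZMod 2) (u v w : ZMod 2) (c : Fin d → ZMod 2) :
    blockEnc S Δ (x + u • Δ) (z + v • Δhat) w c
      = χ (u * ∑ j, Δ j * z j) * χ (v * w) * blockEnc S Δ x z (w + u) c := by
  have hset : c + (x + u • Δ) + w • Δ = c + x + (w + u) • Δ := by
    rw [add_smul]; abel
  unfold blockEnc
  rw [hset]
  by_cases hmem : c + x + (w + u) • Δ ∈ S
  · simp only [hmem, if_true, one_mul]
    -- derive ∑ Δhat (c+x) = w + u
    have h0 := hperp _ hmem
    have h1 : (∑ j, (Δhat j * (c j + x j) + (w + u) * (Δhat j * Δ j)) : ZMod 2) = 0 := by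
      rw [← h0]
      refine Finset.sum_congr rfl fun j _ => ?_
      simp only [Pi.add_apply, Pi.smul_apply, smul_eq_mul]
      ring
    rw [Finset.sum_add_distrib, ← Finset.mul_sum, hpair, mul_one] at h1
    have h2 : ∀ a : ZMod 2, a + a = 0 := by decide
    have hC : (∑ j, Δhat j * (c j + x j) : ZMod 2) = w + u := by
      linear_combination h1 - h2 (w + u)
    have key : (∑ j, (z + v • Δhat) j * (c j + (x + u • Δ) j) : ZMod 2)
        = (u * ∑ j, Δ j * z j) + ((v * w) + ∑ j, z j * (c j + x j)) := by
      have expand : (∑ j, (z + v • Δhat) j * (c j + (x + u • Δ) j) : ZMod 2)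
          = (∑ j, z j * (c j + x j)) + u * (∑ j, Δ j * z j)
            + v * (∑ j, Δhat j * (c j + x j)) + u * v * (∑ j, Δhat j * Δ j) := by
        simp only [Finset.mul_sum, ← Finset.sum_add_distrib]
        refine Finset.sum_congr rfl fun j _ => ?_
        simp only [Pi.add_apply, Pi.smul_apply, smul_eq_mul]
        ring
      rw [expand, hC, hpair]
      linear_combination v * h2 u
    show χ (∑ j, (z + v • Δhat) j * (c j + (x + u • Δ) j)) * _
      = χ (u * ∑ j, Δ j * z j) * χ (v * w) * (χ (∑ j, z j * (c j + x j)) * _)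
    rw [key, χ_add, χ_add]
    ring
  · rw [if_neg hmem]
    ring

/-- **Pauli key update.** With key `k = (S, Δ, x, z)` and Pauli
`P = X^u Z^v`, define `k_P = (S, Δ, x', z')` with `x'_i = x_i ⊕ u_i Δ` and
`z'_i = z_i ⊕ v_i Δ̂`, where `Δ̂ ∈ S^⊥` and `⟨Δ̂, Δ⟩ = 1`.  Then
`Enc_{k_P} = (−1)^{Σ_i u_i ⟨Δ, z_i⟩} · Enc_k ∘ P`. -/
theorem stmt5 {d n : ℕ} (S : Submodule (ZMod 2) (Fin d → ZMod 2))
    (Δ Δhat : Fin d → ZMod 2) (hΔ : Δ ∉ S)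
    (hperp : ∀ s ∈ S, (∑ j, Δhat j * s j : ZMod 2) = 0)
    (hpair : (∑ j, Δhat j * Δ j : ZMod 2) = 1)
    (x z : Fin n → (Fin d → ZMod 2)) (u v : Fin n → ZMod 2)
    (ψ : (Fin n → ZMod 2) → ℂ) :
    cosetEnc S Δ (fun i => x i + u i • Δ) (fun i => z i + v i • Δhat) ψ
      = ((-1 : ℂ) ^ ((∑ i, u i * (∑ j, Δ j * z i j) : ZMod 2)).val) •
          cosetEnc S Δ x z (pauliAct u v ψ) := by
  funext c
  simp only [cosetEnc, Pi.smul_apply, smul_eq_mul, Finset.mul_sum]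
  -- reindex the RHS sum by w ↦ w + u
  refine Fintype.sum_equiv (Equiv.addRight u) _ _ fun w => ?_
  simp only [Equiv.coe_addRight]
  -- LHS term
  have lhs : ψ w * ∏ i, blockEnc S Δ (x i + u i • Δ) (z i + v i • Δhat) (w i) (c i)
      = ψ w * ((∏ i, χ (u i * ∑ j, Δ j * z i j)) * (∏ i, χ (v i * w i)) *
          ∏ i, blockEnc S Δ (x i) (z i) (w i + u i) (c i)) := by
    rw [← Finset.prod_mul_distrib, ← Finset.prod_mul_distrib]
    congr 1
    exact Finset.prod_congr rfl fun i _ =>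
      block_key S Δ Δhat hperp hpair (x i) (z i) (u i) (v i) (w i) (c i)
  rw [lhs]
  -- RHS term
  have huu : w + u + u = w := by
    funext i; simp [add_assoc, CharTwo.add_self_eq_zero]
  simp only [pauliAct, Pi.add_apply, huu]
  have hvw : (∑ i, v i * (w i + u i + u i) : ZMod 2) = ∑ i, v i * w i := by
    refine Finset.sum_congr rfl fun i _ => ?_
    rw [add_assoc, CharTwo.add_self_eq_zero, add_zero]
  rw [hvw, ← χ_sum, ← χ_sum]
  have hφ : (∑ i, u i * ∑ j, Δ j * z i j : ZMod 2) = ∑ i, ∑ j, u i * (Δ j * z i j) :=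
    Finset.sum_congr rfl fun i _ => Finset.mul_sum _ _ _
  show ψ w * (χ _ * χ _ * _) = χ (∑ i, ∑ j, u i * (Δ j * z i j)) * (χ _ * ψ w * _)
  rw [← hφ]
  ring
end

section
/- Query-growth bound: let F be a unitary, Π a projector with ‖Π F (I−Π)‖_op ≤ δ, and |ψ⟩ a state with Π|ψ⟩ = 0. If 𝒜 is a q-query algorithm whose interleaved unitaries U_i all commute with Π, then ‖Π 𝒜^{F}|ψ⟩‖ ≤ q·δ. -/
open scoped Matrix

/-- The ℓ²→ℓ² operator norm of a complex matrix. -/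
noncomputable def opNorm {m n : Type*} [Fintype m] [Fintype n] [DecidableEq n]
    (A : Matrix m n ℂ) : ℝ :=
  ‖LinearMap.toContinuousLinearMap (Matrix.toEuclideanLin A)‖

/-- ℓ²-norm of a complex vector. -/
noncomputable def vecNorm {ι : Type*} [Fintype ι] (v : ι → ℂ) : ℝ :=
  Real.sqrt (∑ i, ‖v i‖ ^ 2)

/-- A `q`-query algorithm: `runAlg Us F q = U_q F U_{q−1} F ⋯ U_1 F U_0`. -/
noncomputable def runAlg {ι : Type*} [Fintype ι] (Us : ℕ → Matrix ι ι ℂ)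
    (F : Matrix ι ι ℂ) : ℕ → Matrix ι ι ℂ
  | 0 => Us 0
  | (q + 1) => Us (q + 1) * F * runAlg Us F q

section aux

set_option linter.unusedSectionVars false

variable {ι : Type} [Fintype ι] [DecidableEq ι]

local notation "T" => Matrix.toEuclideanCLM (𝕜 := ℂ) (n := ι)

noncomputable def ev {ι : Type} [Fintype ι] (v : ι → ℂ) : EuclideanSpace ℂ ι :=
  (WithLp.equiv 2 (ι → ℂ)).symm v

lemma vecNorm_eq' (v : ι → ℂ) : vecNorm v = ‖ev v‖ := by
  rw [EuclideanSpace.norm_eq, vecNorm]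
  rfl

lemma opNorm_eq' (A : Matrix ι ι ℂ) : opNorm A = ‖T A‖ := by
  unfold opNorm
  congr 1

lemma T_mulVec (A : Matrix ι ι ℂ) (v : ι → ℂ) : T A (ev v) = ev (A.mulVec v) := by
  show T A ((WithLp.equiv 2 (ι → ℂ)).symm v) = _
  rw [WithLp.equiv_symm_apply, Matrix.toEuclideanCLM_toLp]
  simp [ev, Matrix.toLin'_apply]

lemma ev_add (a b : ι → ℂ) : ev (a + b) = ev a + ev b := rfl

lemma vecNorm_zero : vecNorm (0 : ι → ℂ) = 0 := by
  simp [vecNorm]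

lemma vecNorm_add_le (a b : ι → ℂ) : vecNorm (a + b) ≤ vecNorm a + vecNorm b := by
  rw [vecNorm_eq', vecNorm_eq', vecNorm_eq', ev_add]
  exact norm_add_le _ _

lemma vecNorm_mulVec_le (A : Matrix ι ι ℂ) (v : ι → ℂ) :
    vecNorm (A.mulVec v) ≤ opNorm A * vecNorm v := by
  rw [vecNorm_eq', vecNorm_eq', ← T_mulVec, opNorm_eq']
  exact ContinuousLinearMap.le_opNorm _ _

lemma unitary_norm_map {U : Matrix ι ι ℂ} (hU : U ∈ Matrix.unitaryGroup ι ℂ)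
    (x : EuclideanSpace ℂ ι) : ‖T U x‖ = ‖x‖ := by
  have h1 : star U * U = 1 := hU.1
  have key : (inner ℂ (T U x) (T U x) : ℂ) = inner ℂ x x := by
    have hs : (star (T U)) (T U x) = x := by
      rw [← ContinuousLinearMap.comp_apply, ← ContinuousLinearMap.mul_def,
        ← map_star T U, ← map_mul, h1, map_one, ContinuousLinearMap.one_apply]
    calc (inner ℂ (T U x) (T U x) : ℂ)
        = inner ℂ ((star (T U)) (T U x)) x := by
          rw [ContinuousLinearMap.star_eq_adjoint, ContinuousLinearMap.adjoint_inner_left]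
      _ = inner ℂ x x := by rw [hs]
  have h2 : ‖T U x‖ ^ 2 = ‖x‖ ^ 2 := by
    have a := inner_self_eq_norm_sq (𝕜 := ℂ) (T U x)
    have b := inner_self_eq_norm_sq (𝕜 := ℂ) x
    rw [← a, ← b, key]
  have := congrArg Real.sqrt h2
  simpa [Real.sqrt_sq, norm_nonneg] using this

lemma vecNorm_unitary {U : Matrix ι ι ℂ} (hU : U ∈ Matrix.unitaryGroup ι ℂ)
    (v : ι → ℂ) : vecNorm (U.mulVec v) = vecNorm v := by
  rw [vecNorm_eq', vecNorm_eq', ← T_mulVec, unitary_norm_map hU]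

lemma proj_contract {P : Matrix ι ι ℂ} (hP : P * P = P) (hPh : Pᴴ = P)
    (x : EuclideanSpace ℂ ι) : ‖T P x‖ ≤ ‖x‖ := by
  have hstar : star (T P) = T P := by rw [← map_star T P]; congr 1
  have key : (inner ℂ (T P x) (T P x) : ℂ) = inner ℂ (T P x) x := by
    calc (inner ℂ (T P x) (T P x) : ℂ)
        = inner ℂ ((star (T P)) (T P x)) x := by
          rw [ContinuousLinearMap.star_eq_adjoint, ContinuousLinearMap.adjoint_inner_left]
      _ = inner ℂ ((T P) (T P x)) x := by rw [hstar]
      _ = inner ℂ ((T P * T P) x) x := rfl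
      _ = inner ℂ ((T (P * P)) x) x := by rw [map_mul]
      _ = inner ℂ (T P x) x := by rw [hP]
  have h1 : ‖T P x‖ ^ 2 = RCLike.re (inner ℂ (T P x) x : ℂ) := by
    rw [← key, inner_self_eq_norm_sq]
  have h2 : RCLike.re (inner ℂ (T P x) x : ℂ) ≤ ‖T P x‖ * ‖x‖ := by
    calc RCLike.re (inner ℂ (T P x) x : ℂ) ≤ ‖(inner ℂ (T P x) x : ℂ)‖ := RCLike.re_le_norm _
      _ ≤ ‖T P x‖ * ‖x‖ := norm_inner_le_norm _ _
  nlinarith [norm_nonneg (T P x), norm_nonneg x]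

lemma vecNorm_proj_le {P : Matrix ι ι ℂ} (hP : P * P = P) (hPh : Pᴴ = P)
    (v : ι → ℂ) : vecNorm (P.mulVec v) ≤ vecNorm v := by
  rw [vecNorm_eq', vecNorm_eq', ← T_mulVec]
  exact proj_contract hP hPh _

lemma opNorm_nonneg' (A : Matrix ι ι ℂ) : 0 ≤ opNorm A := by
  unfold opNorm; positivity

end aux

/-- **query-growth bound.** Let `F` be a unitary, `Π` a projector with
`‖Π F (I−Π)‖_op ≤ δ`, and `ψ` a state with `Πψ = 0`.  If the interleaved unitaries of a
`q`-query algorithm all commute with `Π`, then `‖Π 𝒜^F ψ‖ ≤ q·δ`. -/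
theorem stmt15 {ι : Type} [Fintype ι] [DecidableEq ι]
    (F Pr : Matrix ι ι ℂ) (δ : ℝ)
    (hF : F ∈ Matrix.unitaryGroup ι ℂ)
    (hPr : Pr * Pr = Pr) (hPrh : Prᴴ = Pr)
    (hδ : opNorm (Pr * F * (1 - Pr)) ≤ δ)
    (ψ : ι → ℂ) (hψ0 : Pr.mulVec ψ = 0) (hψ : vecNorm ψ = 1)
    (q : ℕ) (Us : ℕ → Matrix ι ι ℂ)
    (hU : ∀ i, Us i ∈ Matrix.unitaryGroup ι ℂ)
    (hcomm : ∀ i, Us i * Pr = Pr * Us i) :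
    vecNorm (Pr.mulVec ((runAlg Us F q).mulVec ψ)) ≤ q * δ := by
  have hδ0 : 0 ≤ δ := le_trans (opNorm_nonneg' _) hδ
  have hrun : ∀ k, runAlg Us F k ∈ Matrix.unitaryGroup ι ℂ := by
    intro k
    induction k with
    | zero => exact hU 0
    | succ n ih => exact mul_mem (mul_mem (hU (n+1)) hF) ih
  have hvnorm : ∀ k, vecNorm ((runAlg Us F k).mulVec ψ) = 1 := fun k => by
    rw [vecNorm_unitary (hrun k), hψ]
  induction q with
  | zero =>
    have h0 : Pr.mulVec ((runAlg Us F 0).mulVec ψ) = 0 := by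
      rw [show runAlg Us F 0 = Us 0 from rfl, Matrix.mulVec_mulVec, ← hcomm 0,
        ← Matrix.mulVec_mulVec, hψ0, Matrix.mulVec_zero]
    rw [h0, vecNorm_zero]
    simp
  | succ n ih =>
    have key : Pr.mulVec ((runAlg Us F (n+1)).mulVec ψ) =
        (Us (n+1)).mulVec (((Pr * F * (1 - Pr)) * runAlg Us F n).mulVec ψ
          + Pr.mulVec (F.mulVec (Pr.mulVec ((runAlg Us F n).mulVec ψ)))) := by
      have hm : Pr * (Us (n+1) * F * runAlg Us F n) =
          Us (n+1) * ((Pr * F * (1 - Pr)) * runAlg Us F n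
            + Pr * (F * (Pr * runAlg Us F n))) := by
        have hr : (Pr * F * (1 - Pr)) * runAlg Us F n + Pr * (F * (Pr * runAlg Us F n)) =
            Pr * (F * runAlg Us F n) := by
          rw [mul_sub, mul_one, sub_mul]
          have h2 : Pr * (F * (Pr * runAlg Us F n)) = Pr * F * Pr * runAlg Us F n := by
            rw [← mul_assoc, ← mul_assoc]
          rw [h2, mul_assoc Pr F (runAlg Us F n)]
          abel
        rw [hr, mul_assoc (Us (n+1)) F, ← mul_assoc Pr (Us (n+1)), ← hcomm (n+1), mul_assoc]
      rw [runAlg]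
      rw [Matrix.mulVec_mulVec, hm, ← Matrix.mulVec_mulVec, Matrix.add_mulVec]
      simp only [← Matrix.mulVec_mulVec]
    rw [key, vecNorm_unitary (hU (n+1))]
    have hb1 : vecNorm (((Pr * F * (1 - Pr)) * runAlg Us F n).mulVec ψ) ≤ δ := by
      rw [← Matrix.mulVec_mulVec]
      calc vecNorm ((Pr * F * (1 - Pr)).mulVec ((runAlg Us F n).mulVec ψ))
          ≤ opNorm (Pr * F * (1 - Pr)) * vecNorm ((runAlg Us F n).mulVec ψ) :=
            vecNorm_mulVec_le _ _
        _ = opNorm (Pr * F * (1 - Pr)) := by rw [hvnorm n, mul_one]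
        _ ≤ δ := hδ
    have hb2 : vecNorm (Pr.mulVec (F.mulVec (Pr.mulVec ((runAlg Us F n).mulVec ψ)))) ≤
        n * δ := by
      calc vecNorm (Pr.mulVec (F.mulVec (Pr.mulVec ((runAlg Us F n).mulVec ψ))))
          ≤ vecNorm (F.mulVec (Pr.mulVec ((runAlg Us F n).mulVec ψ))) :=
            vecNorm_proj_le hPr hPrh _
        _ = vecNorm (Pr.mulVec ((runAlg Us F n).mulVec ψ)) := vecNorm_unitary hF _
        _ ≤ n * δ := ih
    calc vecNorm (((Pr * F * (1 - Pr)) * runAlg Us F n).mulVec ψ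
            + Pr.mulVec (F.mulVec (Pr.mulVec ((runAlg Us F n).mulVec ψ))))
        ≤ vecNorm (((Pr * F * (1 - Pr)) * runAlg Us F n).mulVec ψ)
            + vecNorm (Pr.mulVec (F.mulVec (Pr.mulVec ((runAlg Us F n).mulVec ψ)))) :=
          vecNorm_add_le _ _
      _ ≤ δ + n * δ := add_le_add hb1 hb2
      _ = (↑(n + 1) : ℝ) * δ := by push_cast; ring
end
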